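/- Stone–Weierstrass via lattice conditions: Let T be a compact Hausdorff topological space and Σ ⊆ C⁰(T) a subset such that (1) Σ separates points of T, (2) Σ contains a nonzero real constant function, (3) Σ is a ℚ-vector subspace of C⁰(T), and (4) Σ is closed under pointwise maximum: f, g ∈ Σ ⟹ max{f,g} ∈ Σ. Then Σ is dense in C⁰(T) for the supremum norm. -/

import Mathlib

/-- Stone–Weierstrass via lattice conditions. Let `T` be a compact
Hausdorff space and `S ⊆ C⁰(T)` a subset that (1) separates points, (2) contains a nonzero
real constant function, (3) is a `ℚ`-vector subspace of `C⁰(T)`, and (4) is closed under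
pointwise maximum. Then `S` is dense in `C⁰(T)` for the supremum norm. -/
theorem stmt13 {T : Type*} [TopologicalSpace T] [CompactSpace T] [T2Space T]
    (S : Set C(T, ℝ))
    (hsep : ∀ x y : T, x ≠ y → ∃ f ∈ S, f x ≠ f y)
    (hconst : ∃ c : ℝ, c ≠ 0 ∧ ContinuousMap.const T c ∈ S)
    (hzero : (0 : C(T, ℝ)) ∈ S)
    (hadd : ∀ f ∈ S, ∀ g ∈ S, f + g ∈ S)
    (hsmul : ∀ (q : ℚ), ∀ f ∈ S, (q : ℝ) • f ∈ S)
    (hmax : ∀ f ∈ S, ∀ g ∈ S, f ⊔ g ∈ S) :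
    Dense S := by
  -- abs is Lipschitz hence continuous on C(T, ℝ)
  have habs_cont : Continuous (fun h : C(T, ℝ) => |h|) := by
    refine LipschitzWith.continuous (K := 1) ?_
    rw [lipschitzWith_iff_dist_le_mul]
    intro f g
    push_cast; rw [one_mul]
    refine ContinuousMap.dist_le dist_nonneg |>.mpr fun x => ?_
    calc dist (|f| x) (|g| x) = dist |f x| |g x| := rfl
      _ ≤ dist (f x) (g x) := by
          rw [Real.dist_eq, Real.dist_eq]; exact abs_abs_sub_abs_le_abs_sub _ _
      _ ≤ dist f g := ContinuousMap.dist_apply_le_dist x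
  have hsup_cont : Continuous (fun p : C(T, ℝ) × C(T, ℝ) => p.1 ⊔ p.2) := by
    have heq : (fun p : C(T, ℝ) × C(T, ℝ) => p.1 ⊔ p.2)
        = fun p : C(T, ℝ) × C(T, ℝ) => (2⁻¹ : ℝ) • (p.1 + p.2 + |p.1 - p.2|) := by
      funext p; ext x
      simp only [ContinuousMap.sup_apply, ContinuousMap.smul_apply, ContinuousMap.add_apply,
        ContinuousMap.abs_apply, ContinuousMap.sub_apply, smul_eq_mul]
      rw [max_def_lt]; rcases lt_or_ge (p.1 x) (p.2 x) with h|h <;> [rw [if_pos h, abs_of_neg (by linarith)]; rw [if_neg (not_lt.mpr h), abs_of_nonneg (by linarith)]] <;> ring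
    rw [heq]
    exact (show Continuous (fun p : C(T, ℝ) × C(T, ℝ) => p.1 + p.2 + |p.1 - p.2|) from (continuous_fst.add continuous_snd).add
      (habs_cont.comp (continuous_fst.sub continuous_snd))).const_smul (2⁻¹ : ℝ)
  set L := closure S with hL
  -- closure is closed under the binary operations
  have hbin : ∀ (op : C(T, ℝ) → C(T, ℝ) → C(T, ℝ)), Continuous (fun p : C(T, ℝ) × C(T, ℝ) => op p.1 p.2) →
      (∀ f ∈ S, ∀ g ∈ S, op f g ∈ S) → ∀ f ∈ L, ∀ g ∈ L, op f g ∈ L := by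
    intro op hc hS f hf g hg
    have hmt : Set.MapsTo (fun p : C(T, ℝ) × C(T, ℝ) => op p.1 p.2) (S ×ˢ S) S := by
      rintro ⟨a, b⟩ ⟨ha, hb⟩; exact hS a ha b hb
    have h2 := hmt.closure hc
    rw [closure_prod_eq] at h2
    rw [← hL] at h2
    exact h2 (show (f, g) ∈ L ×ˢ L from Set.mem_prod.mpr ⟨hf, hg⟩)
  have hadd' : ∀ f ∈ L, ∀ g ∈ L, f + g ∈ L :=
    hbin _ (continuous_fst.add continuous_snd) hadd
  have hsup' : ∀ f ∈ L, ∀ g ∈ L, f ⊔ g ∈ L :=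
    hbin _ hsup_cont hmax
  -- closure is closed under real scalar multiplication
  have hqsmul' : ∀ (q : ℚ), ∀ f ∈ L, (q : ℝ) • f ∈ L := by
    intro q f hf
    have hmt : Set.MapsTo (fun g : C(T, ℝ) => (q : ℝ) • g) S S := fun g hg => hsmul q g hg
    exact hmt.closure (continuous_const_smul _) hf
  have hsmul' : ∀ (a : ℝ), ∀ f ∈ L, a • f ∈ L := by
    intro a f hf
    have hQ : a ∈ closure (Set.range ((↑) : ℚ → ℝ)) := by
      rw [Rat.denseRange_cast.closure_range]; trivial
    have hcont : Continuous (fun r : ℝ => r • f) := continuous_id.smul continuous_const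
    have hmt : Set.MapsTo (fun r : ℝ => r • f) (Set.range ((↑) : ℚ → ℝ)) L := by
      rintro r ⟨q, rfl⟩; exact hqsmul' q f hf
    have := hmt.closure hcont
    rw [closure_closure] at this
    exact this hQ
  have hneg' : ∀ f ∈ L, -f ∈ L := by
    intro f hf
    have := hsmul' (-1) f hf
    simpa using this
  have hinf' : ∀ f ∈ L, ∀ g ∈ L, f ⊓ g ∈ L := by
    intro f hf g hg
    have : f ⊓ g = -((-f) ⊔ (-g)) := by
      ext x; simp [max_neg_neg]
    rw [this]
    exact hneg' _ (hsup' _ (hneg' f hf) _ (hneg' g hg))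
  -- constants are in the closure
  obtain ⟨c, hc0, hcS⟩ := hconst
  have hconst' : ∀ a : ℝ, ContinuousMap.const T a ∈ L := by
    intro a
    have := hsmul' (a / c) _ (subset_closure hcS)
    have heq : (a / c) • ContinuousMap.const T c = ContinuousMap.const T a := by
      ext x; simp [div_mul_cancel₀ a hc0]
    rwa [heq] at this
  -- strong separation
  have hsepS : L.SeparatesPointsStrongly := by
    intro v x y
    by_cases hxy : x = y
    · exact ⟨ContinuousMap.const T (v x), hconst' _, rfl, by simp [hxy]⟩
    · obtain ⟨g, hgS, hg⟩ := hsep x y hxy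
      set α : ℝ := (v x - v y) / (g x - g y) with hα
      refine ⟨α • g + ContinuousMap.const T (v x - α * g x),
        hadd' _ (hsmul' α g (subset_closure hgS)) _ (hconst' _), ?_, ?_⟩
      · simp
      · have hne : g x - g y ≠ 0 := sub_ne_zero.mpr hg
        simp only [ContinuousMap.add_apply, ContinuousMap.smul_apply, ContinuousMap.const_apply,
          smul_eq_mul]
        rw [hα]; field_simp
        ring
    -- done
  have := ContinuousMap.sublattice_closure_eq_top L ⟨0, subset_closure hzero⟩ hinf' hsup' hsepS
  rw [dense_iff_closure_eq]
  rw [hL, closure_closure] at this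
  rw [this]; rfl
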